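/- arXiv:1612.09158 — 2 statements merged into one kernel-verified Lean document; each statement's English description precedes it below -/
import Mathlib

section
/- The stable spline kernel K(t,s) = exp(−β·max(t,s)), β > 0, is a positive definite kernel on ℝ₊ × ℝ₊: for any points t_1,…,t_p ≥ 0 and scalars c_1,…,c_p, ∑_{i,j} c_i c_j exp(−β·max(t_i, t_j)) ≥ 0. -/
open MeasureTheory Set

lemma ind_integrable (a : ℝ) :
    Integrable ((Set.Ioc (0:ℝ) a).indicator (1 : ℝ → ℝ)) := by
  rw [integrable_indicator_iff measurableSet_Ioc]
  exact integrableOn_const (by simp [Real.volume_Ioc])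

lemma ind_mul (a b : ℝ) :
    (Set.Ioc (0:ℝ) a).indicator (1 : ℝ → ℝ) * (Set.Ioc (0:ℝ) b).indicator (1 : ℝ → ℝ)
      = (Set.Ioc (0:ℝ) (min a b)).indicator (1 : ℝ → ℝ) := by
  funext u
  simp only [Pi.mul_apply, Set.indicator, Set.mem_Ioc, le_min_iff, Pi.one_apply]
  split_ifs <;> simp_all

lemma ind_integral (a : ℝ) (ha : 0 ≤ a) :
    ∫ u, (Set.Ioc (0:ℝ) a).indicator (1 : ℝ → ℝ) u = a := by
  rw [MeasureTheory.integral_indicator_one measurableSet_Ioc, Real.volume_real_Ioc,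
    max_eq_left (by linarith), sub_zero]

/-- The stable spline kernel `K(t,s) = exp(−β·max(t,s))`, `β > 0`, is a
positive definite kernel on `ℝ₊ × ℝ₊`: all its Gram matrices are positive
semidefinite. -/
theorem stable_spline_posdef (β : ℝ) (hβ : 0 < β) :
    ∀ (p : ℕ) (t : Fin p → ℝ), (∀ i, 0 ≤ t i) → ∀ c : Fin p → ℝ,
      0 ≤ ∑ i : Fin p, ∑ j : Fin p, c i * c j * Real.exp (-β * max (t i) (t j)) := by
  intro p t ht c
  set f : Fin p → ℝ → ℝ := fun i => (Set.Ioc (0:ℝ) (Real.exp (-β * t i))).indicator 1 with hf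
  have key : ∀ i j, Real.exp (-β * max (t i) (t j)) = ∫ u, f i u * f j u := by
    intro i j
    have hmin : min (Real.exp (-β * t i)) (Real.exp (-β * t j))
        = Real.exp (-β * max (t i) (t j)) := by
      rcases le_total (t i) (t j) with h | h
      · rw [max_eq_right h, min_eq_right (Real.exp_le_exp.2 (by nlinarith))]
      · rw [max_eq_left h, min_eq_left (Real.exp_le_exp.2 (by nlinarith))]
    calc Real.exp (-β * max (t i) (t j))
        = ∫ u, (Set.Ioc (0:ℝ) (min (Real.exp (-β * t i)) (Real.exp (-β * t j)))).indicator
            (1 : ℝ → ℝ) u := by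
          rw [ind_integral _ (le_of_lt (by positivity)), hmin]
      _ = ∫ u, f i u * f j u := by rw [← ind_mul]; rfl
  have hint : ∀ i j : Fin p, Integrable (fun u => c i * c j * (f i u * f j u)) := by
    intro i j
    have : Integrable (fun u => f i u * f j u) := by
      have := ind_integrable (min (Real.exp (-β * t i)) (Real.exp (-β * t j)))
      rw [← ind_mul] at this
      exact this
    exact this.const_mul _
  calc (0:ℝ) ≤ ∫ u, (∑ i, c i * f i u) ^ 2 := integral_nonneg fun u => sq_nonneg _
    _ = ∫ u, ∑ i, ∑ j, c i * c j * (f i u * f j u) := by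
        congr 1; funext u
        rw [sq, Finset.sum_mul_sum]
        exact Finset.sum_congr rfl fun i _ => Finset.sum_congr rfl fun j _ => by ring
    _ = ∑ i, ∑ j, ∫ u, c i * c j * (f i u * f j u) := by
        rw [integral_finset_sum _ fun i _ => integrable_finset_sum _ fun j _ => hint i j]
        exact Finset.sum_congr rfl fun i _ => integral_finset_sum _ fun j _ => hint i j
    _ = ∑ i, ∑ j, c i * c j * Real.exp (-β * max (t i) (t j)) := by
        refine Finset.sum_congr rfl fun i _ => Finset.sum_congr rfl fun j _ => ?_
        rw [integral_const_mul, key]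
end

section
/- Let H be an RKHS over X with kernel 𝒦 and let x_1,…,x_N ∈ X, Y ∈ ℝ^N, γ > 0. The minimizer over H of f ↦ (1/N)∑_{i=1}^N (y_i − f(x_i))² + γ‖f‖²_H is unique and given by ĝ = ∑_{i=1}^N ĉ_i 𝒦_{x_i}, where ĉ = (𝐊 + γN I_N)^{-1} Y and 𝐊 is the N × N Gram matrix with entries 𝒦(x_i, x_j). -/
open Matrix

/-- representer theorem: In an RKHS `H` with kernel `𝒦`, given data
`x₁,…,x_N`, `Y ∈ ℝ^N` and `γ > 0`, the regularized least-squares objective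
`f ↦ (1/N)∑ᵢ (yᵢ − f(xᵢ))² + γ‖f‖²` has the unique minimizer
`ĝ = ∑ᵢ ĉᵢ 𝒦_{xᵢ}` with `ĉ = (Kmat + γN I)⁻¹ Y`, `Kmatᵢⱼ = 𝒦(xᵢ,xⱼ)`. -/
theorem representer_theorem
    {H : Type*} [NormedAddCommGroup H] [InnerProductSpace ℝ H]
    {X : Type*}
    (ev : H → X → ℝ) (Kx : X → H) (𝒦 : X → X → ℝ)
    (hK : ∀ x y : X, 𝒦 x y = ev (Kx x) y)
    (hrep : ∀ (g : H) (x : X), (inner ℝ (Kx x) g : ℝ) = ev g x)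
    (N : ℕ) (x : Fin N → X) (Y : Fin N → ℝ) (γ : ℝ) (hγ : 0 < γ) :
    let Kmat : Matrix (Fin N) (Fin N) ℝ := fun i j => 𝒦 (x i) (x j)
    let c : Fin N → ℝ := (Kmat + (γ * N) • (1 : Matrix (Fin N) (Fin N) ℝ))⁻¹.mulVec Y
    let g : H := ∑ i, c i • Kx (x i)
    let J : H → ℝ := fun f =>
      (∑ i, (Y i - ev f (x i)) ^ 2) / N + γ * ‖f‖ ^ 2
    (∀ f : H, J g ≤ J f) ∧ (∀ f : H, J f = J g → f = g) := by
  intro Kmat c g J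
  -- kernel/inner facts
  have hinner : ∀ a b : X, (inner ℝ (Kx a) (Kx b) : ℝ) = 𝒦 b a := by
    intro a b; rw [hrep, ← hK]
  have hsym : ∀ a b : X, 𝒦 a b = 𝒦 b a := by
    intro a b; rw [← hinner, real_inner_comm, hinner]
  rcases Nat.eq_zero_or_pos N with hN | hN
  · -- trivial case N = 0
    subst hN
    have hg : g = 0 := by simp [g]
    have hJ : ∀ f : H, J f = γ * ‖f‖ ^ 2 := by
      intro f; simp [J]
    constructor
    · intro f; rw [hJ, hJ, hg]
      simp
      positivity
    · intro f hf
      rw [hJ, hJ, hg] at hf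
      simp at hf
      rcases hf with hf | hf
      · exact absurd hf hγ.ne'
      · rw [hg]; simpa using hf
  -- main case
  have hNR : (0:ℝ) < N := by exact_mod_cast hN
  set M : Matrix (Fin N) (Fin N) ℝ :=
    Kmat + (γ * N) • (1 : Matrix (Fin N) (Fin N) ℝ) with hM
  -- M is positive definite
  have hquad : ∀ v : Fin N → ℝ, dotProduct v (Kmat *ᵥ v) = ‖∑ i, v i • Kx (x i)‖ ^ 2 := by
    intro v
    rw [← real_inner_self_eq_norm_sq, sum_inner]
    simp only [real_inner_smul_left, inner_sum, real_inner_smul_right, hinner]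
    rw [dotProduct, Finset.sum_congr rfl]
    intro i _
    rw [mulVec, dotProduct]
    rw [Finset.mul_sum]
    refine Finset.sum_congr rfl fun j _ => ?_
    simp [Kmat, hsym (x j) (x i)]
    ring
  have hpd : M.PosDef := by
    refine Matrix.posDef_iff_dotProduct_mulVec.mpr ⟨?_, ?_⟩
    · -- Hermitian
      ext i j
      rw [conjTranspose_apply, hM, Matrix.add_apply, Matrix.add_apply, Matrix.smul_apply, Matrix.smul_apply, Matrix.one_apply, Matrix.one_apply]
      simp [M, Kmat, conjTranspose, Matrix.one_apply, hsym (x j) (x i), eq_comm]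
    · intro v hv
      have : dotProduct (star v) (M *ᵥ v)
          = ‖∑ i, v i • Kx (x i)‖ ^ 2 + (γ * N) * dotProduct v v := by
        simp [M, add_mulVec, smul_mulVec, dotProduct_add, dotProduct_smul, hquad]
      rw [this]
      have h0 : 0 ≤ dotProduct v v := Finset.sum_nonneg fun i _ => mul_self_nonneg _
      have h1 : 0 < dotProduct v v := by
        rcases lt_or_eq_of_le h0 with h | h
        · exact h
        · exact absurd (dotProduct_self_eq_zero.mp h.symm) hv
      have : 0 < (γ * N) * dotProduct v v := by positivity
      nlinarith [sq_nonneg ‖∑ i, v i • Kx (x i)‖]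
  have hMc : M *ᵥ c = Y := by
    have : c = M⁻¹ *ᵥ Y := rfl
    rw [this, mulVec_mulVec, mul_nonsing_inv _ hpd.det_pos.ne'.isUnit, one_mulVec]
  -- residual identity: Y i - ev g (x i) = γ * N * c i
  have hevg : ∀ f : H, ∀ i, ev f (x i) = inner ℝ (Kx (x i)) f := fun f i => (hrep f (x i)).symm
  have hres : ∀ i, Y i - ev g (x i) = γ * N * c i := by
    intro i
    have h1 : ev g (x i) = (Kmat *ᵥ c) i := by
      rw [← hrep]; simp only [g]; rw [inner_sum]
      simp only [real_inner_smul_right, hinner]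
      rw [mulVec, dotProduct]
      refine Finset.sum_congr rfl fun j _ => ?_
      simp [Kmat, hsym (x j) (x i)]
      ring
    have h2 := congrFun hMc i
    simp [M, add_mulVec, smul_mulVec] at h2
    rw [h1]
    linarith
  -- inner of g with h
  have hgh : ∀ h : H, (inner ℝ g h : ℝ) = ∑ i, c i * inner ℝ (Kx (x i)) h := by
    intro h; simp only [g]; rw [sum_inner]; simp [real_inner_smul_left]
  -- key identity
  have key : ∀ f : H, J f = J g + (∑ i, ((inner ℝ (Kx (x i)) (f - g) : ℝ)) ^ 2) / N
      + γ * ‖f - g‖ ^ 2 := by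
    intro f
    set h := f - g with hh
    have hf : f = g + h := by rw [hh]; abel
    have hnorm : ‖f‖ ^ 2 = ‖g‖ ^ 2 + 2 * inner ℝ g h + ‖h‖ ^ 2 := by
      rw [hf]; exact norm_add_sq_real g h
    have hev : ∀ i, ev f (x i) = ev g (x i) + inner ℝ (Kx (x i)) h := by
      intro i; rw [hevg, hevg, hf, inner_add_right]
    have hsum : ∑ i, (Y i - ev f (x i)) ^ 2
        = ∑ i, ((Y i - ev g (x i)) ^ 2
          - 2 * (γ * N) * (c i * inner ℝ (Kx (x i)) h)
          + ((inner ℝ (Kx (x i)) h : ℝ)) ^ 2) := by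
      refine Finset.sum_congr rfl fun i _ => ?_
      rw [hev i]
      linear_combination (-2 * (inner ℝ (Kx (x i)) h : ℝ)) * hres i
    have hsum2 : ∑ i, (Y i - ev f (x i)) ^ 2
        = ∑ i, (Y i - ev g (x i)) ^ 2
          - 2 * (γ * N) * ∑ i, c i * inner ℝ (Kx (x i)) h
          + ∑ i, ((inner ℝ (Kx (x i)) h : ℝ)) ^ 2 := by
      rw [hsum, Finset.sum_add_distrib, Finset.sum_sub_distrib, ← Finset.mul_sum]
    simp only [J]
    rw [hsum2, hnorm, hgh h]
    field_simp
    ring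
  constructor
  · intro f
    rw [key f]
    have h1 : 0 ≤ (∑ i, ((inner ℝ (Kx (x i)) (f - g) : ℝ)) ^ 2) / N := by positivity
    nlinarith [sq_nonneg ‖f - g‖, norm_nonneg (f - g)]
  · intro f hf
    rw [key f] at hf
    have h1 : 0 ≤ (∑ i, ((inner ℝ (Kx (x i)) (f - g) : ℝ)) ^ 2) / N := by positivity
    have h2 : 0 ≤ γ * ‖f - g‖ ^ 2 := by positivity
    have h3 : γ * ‖f - g‖ ^ 2 = 0 := by linarith
    have h4 : ‖f - g‖ ^ 2 = 0 := (mul_eq_zero.mp h3).resolve_left hγ.ne'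
    have := norm_eq_zero.mp ((pow_eq_zero_iff (n := 2) (by norm_num)).mp h4)
    have : f = g := by rwa [sub_eq_zero] at this
    exact this
end
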